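/- arXiv:1012.5409 — 4 statements merged into one kernel-verified Lean document; each statement's English description precedes it below -/
import Mathlib

section
/- Let d ≥ 1 and d < α < d+2. There exists c > 0 such that for all x, y ∈ ℝ^d with |x-y| ≤ 1, the sum ∑_{k ∈ ℤ^d} (1+4π²|k|²)^(-α/2) · 2 sin²(π k·(x-y)) is at most c|x-y|^(α-d). -/
open Real Finset

private lemma antitoneOn_rpow_const {s : ℝ} (hs : s ≤ 0) {a b : ℝ} (ha : 0 < a) :
    AntitoneOn (fun x : ℝ => x ^ s) (Set.Icc a b) := fun u hu _ _ huv =>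
  Real.rpow_le_rpow_of_nonpos (lt_of_lt_of_le ha hu.1) huv hs

private lemma tail_sum_le {s : ℝ} (hs : s < -1) {N M : ℕ} (hN : 1 ≤ N) :
    ∑ n ∈ Finset.Icc (N + 1) M, (n : ℝ) ^ s ≤ (N : ℝ) ^ (s + 1) / (-(s + 1)) := by
  have hden : (0:ℝ) < -(s+1) := by linarith
  rcases le_or_gt M N with hMN | hMN
  · rw [Finset.Icc_eq_empty (by omega), Finset.sum_empty]
    positivity
  · have hNR : (1:ℝ) ≤ (N:ℝ) := by exact_mod_cast hN
    have key := AntitoneOn.sum_le_integral_Ico (f := fun x : ℝ => x ^ s) hMN.le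
      (antitoneOn_rpow_const (by linarith) (by positivity))
    have hsum : ∑ n ∈ Finset.Icc (N + 1) M, (n : ℝ) ^ s
        = ∑ i ∈ Finset.Ico N M, ((i + 1 : ℕ) : ℝ) ^ s := by
      rw [← Finset.Ico_add_one_right_eq_Icc, Finset.sum_Ico_eq_sum_range, Finset.sum_Ico_eq_sum_range]
      have : M + 1 - (N + 1) = M - N := by omega
      rw [this]
      refine Finset.sum_congr rfl fun i _ => ?_
      congr 1
      push_cast
      ring
    have hint : ∫ x in (N:ℝ)..(M:ℝ), x ^ s
        = ((M:ℝ) ^ (s + 1) - (N:ℝ) ^ (s + 1)) / (s + 1) := by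
      apply integral_rpow
      right
      refine ⟨by linarith, ?_⟩
      rw [Set.uIcc_of_le (by exact_mod_cast hMN.le)]
      intro h0
      have := (Set.mem_Icc.mp h0).1
      linarith
    rw [hsum]
    refine le_trans key ?_
    rw [hint]
    have : ((M:ℝ) ^ (s + 1) - (N:ℝ) ^ (s + 1)) / (s + 1)
        = ((N:ℝ) ^ (s + 1) - (M:ℝ) ^ (s + 1)) / (-(s + 1)) := by
      rw [div_eq_div_iff (by linarith : s+1 ≠ 0) (by linarith : -(s+1) ≠ 0)]
      ring
    rw [this]
    gcongr
    have := Real.rpow_nonneg (by positivity : (0:ℝ) ≤ (M:ℝ)) (s+1)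
    linarith

private lemma head_sum_le {s : ℝ} (hs : -1 < s) (hs1 : s ≤ 1) {N : ℕ} (hN : 1 ≤ N) :
    ∑ n ∈ Finset.Icc 1 N, (n : ℝ) ^ s ≤ (1 + 1 / (s + 1)) * (N : ℝ) ^ (s + 1) := by
  have hp : (0:ℝ) < s + 1 := by linarith
  have hNR : (1:ℝ) ≤ (N:ℝ) := by exact_mod_cast hN
  have hNpos : (0:ℝ) < (N:ℝ) := by linarith
  have hNp1 : (1:ℝ) ≤ (N:ℝ) ^ (s + 1) := by
    calc (1:ℝ) = (1:ℝ) ^ (s+1) := (Real.one_rpow _).symm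
    _ ≤ (N:ℝ) ^ (s+1) := Real.rpow_le_rpow zero_le_one hNR hp.le
  rcases le_or_gt 0 s with hs0 | hs0
  · have : ∑ n ∈ Finset.Icc 1 N, (n : ℝ) ^ s ≤ ∑ _n ∈ Finset.Icc 1 N, (N : ℝ) ^ s := by
      refine Finset.sum_le_sum fun n hn => ?_
      exact Real.rpow_le_rpow (Nat.cast_nonneg n)
        (Nat.cast_le.mpr (Finset.mem_Icc.mp hn).2) hs0
    refine this.trans ?_
    rw [Finset.sum_const, Nat.card_Icc]
    simp only [Nat.add_sub_cancel, nsmul_eq_mul]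
    have h1 : (N:ℝ) * (N:ℝ) ^ s = (N:ℝ) ^ (s+1) := by
      rw [Real.rpow_add hNpos, Real.rpow_one]; ring
    rw [h1]
    nlinarith [Real.rpow_nonneg hNpos.le (s+1), one_div_pos.mpr hp]
  · -- s < 0 : compare with integral
    rcases Nat.eq_or_lt_of_le hN with h1N | h1N
    · rw [← h1N]
      simp only [Finset.Icc_self, Finset.sum_singleton, Nat.cast_one, Real.one_rpow]
      nlinarith [one_div_pos.mpr hp]
    · have hsplit : Finset.Icc 1 N = insert 1 (Finset.Icc 2 N) := by
        rw [show (2:ℕ) = 1 + 1 from rfl, Finset.Icc_add_one_left_eq_Ioc]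
        exact (Finset.Ioc_insert_left hN).symm
      rw [hsplit, Finset.sum_insert (by simp)]
      have key := AntitoneOn.sum_le_integral_Ico (f := fun x : ℝ => x ^ s) h1N.le
        (antitoneOn_rpow_const hs0.le (by norm_num))
      have hsum : ∑ n ∈ Finset.Icc 2 N, (n : ℝ) ^ s
          = ∑ i ∈ Finset.Ico 1 N, ((i + 1 : ℕ) : ℝ) ^ s := by
        rw [← Finset.Ico_add_one_right_eq_Icc, Finset.sum_Ico_eq_sum_range, Finset.sum_Ico_eq_sum_range]
        have : N + 1 - 2 = N - 1 := by omega
        rw [this]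
        refine Finset.sum_congr rfl fun i _ => ?_
        congr 1
        push_cast
        ring
      have hint : ∫ x in (1:ℝ)..(N:ℝ), x ^ s
          = ((N:ℝ) ^ (s + 1) - 1) / (s + 1) := by
        rw [integral_rpow (Or.inl hs), Real.one_rpow]
      have hcast : ∑ i ∈ Finset.Ico 1 N, ((i + 1 : ℕ) : ℝ) ^ s ≤ ((N:ℝ) ^ (s + 1) - 1) / (s + 1) := by
        have := key
        rw [Nat.cast_one] at this
        rw [← hint]
        exact this
      rw [Nat.cast_one, Real.one_rpow, hsum]
      have hfin : ((N:ℝ) ^ (s + 1) - 1) / (s + 1) ≤ (N:ℝ) ^ (s + 1) / (s + 1) := by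
        gcongr
        linarith
      have heq : (N:ℝ) ^ (s+1) / (s+1) = 1/(s+1) * (N:ℝ)^(s+1) := by ring
      nlinarith [hcast.trans hfin]

private lemma box_card (d n : ℕ) :
    (Fintype.piFinset (fun _ : Fin d => Finset.Icc (-(n:ℤ)) n)).card = (2 * n + 1) ^ d := by
  rw [Fintype.card_piFinset]
  have : (Finset.Icc (-(n:ℤ)) n).card = 2 * n + 1 := by
    rw [Int.card_Icc]
    omega
  simp [this]

private lemma shell_card_le (d : ℕ) (hd : 1 ≤ d) (n : ℕ) (hn : 1 ≤ n) :
    (((Fintype.piFinset (fun _ : Fin d => Finset.Icc (-(n:ℤ)) n)).card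
      - (Fintype.piFinset (fun _ : Fin d => Finset.Icc (-((n:ℕ)-1:ℕ):ℤ) ((n:ℕ)-1:ℕ))).card : ℕ) : ℝ)
      ≤ 2 * d * 3 ^ (d-1) * (n:ℝ) ^ (d-1) := by
  rw [box_card, box_card]
  have hle : (2 * (n-1) + 1) ^ d ≤ (2 * n + 1) ^ d := Nat.pow_le_pow_left (by omega) d
  rw [Nat.cast_sub hle]
  push_cast
  rw [show ((n-1:ℕ):ℝ) = (n:ℝ)-1 from by rw [Nat.cast_sub hn]; norm_num,
    show 2*((n:ℝ)-1)+1 = 2*(n:ℝ)-1 from by ring]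
  set a : ℝ := 2 * (n:ℝ) + 1 with ha
  set b : ℝ := 2 * (n:ℝ) - 1 with hb
  have hnR : (1:ℝ) ≤ (n:ℝ) := by exact_mod_cast hn
  have hba : b ≤ a := by simp [ha, hb]; linarith
  have hb0 : (0:ℝ) ≤ b := by simp [hb]; linarith
  have ha1 : (1:ℝ) ≤ a := by rw [ha]; linarith
  have hgeom : a ^ d - b ^ d = (∑ i ∈ Finset.range d, a ^ i * b ^ (d - 1 - i)) * (a - b) :=
    (geom_sum₂_mul a b d).symm
  rw [hgeom]
  have hterm : ∀ i ∈ Finset.range d, a ^ i * b ^ (d - 1 - i) ≤ a ^ (d-1) := by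
    intro i hi
    have hid : i ≤ d - 1 := by
      have := Finset.mem_range.mp hi; omega
    calc a ^ i * b ^ (d - 1 - i) ≤ a ^ i * a ^ (d - 1 - i) := by
          gcongr
      _ = a ^ (d - 1) := by
          rw [← pow_add]
          congr 1
          omega
  have hsum : (∑ i ∈ Finset.range d, a ^ i * b ^ (d - 1 - i)) ≤ d * a ^ (d-1) := by
    calc (∑ i ∈ Finset.range d, a ^ i * b ^ (d - 1 - i))
        ≤ ∑ _i ∈ Finset.range d, a ^ (d-1) := Finset.sum_le_sum hterm
      _ = d * a ^ (d-1) := by rw [Finset.sum_const, Finset.card_range, nsmul_eq_mul]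
  have hab2 : a - b = 2 := by simp [ha, hb]; ring
  rw [hab2]
  have hapow : a ^ (d-1) ≤ 3 ^ (d-1) * (n:ℝ) ^ (d-1) := by
    rw [← mul_pow]
    apply pow_le_pow_left₀ (by linarith) (by simp [ha]; linarith)
  have hsumnn : (0:ℝ) ≤ ∑ i ∈ Finset.range d, a ^ i * b ^ (d - 1 - i) :=
    Finset.sum_nonneg fun i _ => mul_nonneg (pow_nonneg (by linarith) _) (pow_nonneg hb0 _)
  have hd0 : (0:ℝ) ≤ d := Nat.cast_nonneg d
  nlinarith [hsum.trans (by nlinarith [pow_nonneg (by linarith : (0:ℝ) ≤ a) (d-1)] :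
    (d:ℝ) * a ^ (d-1) ≤ (d:ℝ) * (3 ^ (d-1) * (n:ℝ) ^ (d-1)))]

private lemma term_bound (d : ℕ) (hd : 1 ≤ d) (α : ℝ) (hα : 0 < α) (k : Fin d → ℤ)
    (h : Fin d → ℝ) (n : ℕ)
    (hn : Finset.univ.sup (fun i => (k i).natAbs) = n) (hn1 : 1 ≤ n) :
    (1 + 4 * π ^ 2 * ∑ i, (k i : ℝ) ^ 2) ^ (-(α / 2)) *
      (2 * Real.sin (π * ∑ i, (k i : ℝ) * h i) ^ 2)
    ≤ 2 * (2 * π) ^ (-α) * (n : ℝ) ^ (-α)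
        * min 1 (π ^ 2 * d * (n:ℝ) ^ 2 * ∑ i, (h i) ^ 2) := by
  have : Nonempty (Fin d) := ⟨⟨0, hd⟩⟩
  set Q : ℝ := ∑ i, (k i : ℝ) ^ 2 with hQ
  set S : ℝ := ∑ i, (k i : ℝ) * h i with hS
  set T : ℝ := ∑ i, (h i) ^ 2 with hT
  have hT0 : 0 ≤ T := Finset.sum_nonneg fun i _ => sq_nonneg _
  have hcast : ∀ i, ((k i : ℝ)) ^ 2 = (((k i).natAbs : ℝ)) ^ 2 := fun i => by
    rw [Nat.cast_natAbs, Int.cast_abs, sq_abs]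
  -- Q ≥ n^2
  obtain ⟨i₀, -, hi₀⟩ := Finset.exists_mem_eq_sup Finset.univ Finset.univ_nonempty
    (fun i => (k i).natAbs)
  have hQn : ((n:ℝ)) ^ 2 ≤ Q := by
    rw [hQ]
    calc ((n:ℝ)) ^ 2 = ((k i₀ : ℝ)) ^ 2 := by
          rw [hcast i₀, ← hn, hi₀]
      _ ≤ ∑ i, (k i : ℝ) ^ 2 :=
          Finset.single_le_sum (f := fun i => ((k i:ℝ))^2) (fun i _ => sq_nonneg _) (Finset.mem_univ i₀)
  -- Q ≤ d n^2
  have hQd : Q ≤ d * (n:ℝ) ^ 2 := by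
    rw [hQ]
    calc ∑ i, (k i : ℝ) ^ 2 ≤ ∑ _i : Fin d, ((n:ℝ)) ^ 2 := by
          refine Finset.sum_le_sum fun i _ => ?_
          rw [hcast i]
          have : (k i).natAbs ≤ n := hn ▸ Finset.le_sup (f := fun i => (k i).natAbs) (Finset.mem_univ i)
          have : (((k i).natAbs : ℝ)) ≤ (n:ℝ) := by exact_mod_cast this
          nlinarith [(by positivity : (0:ℝ) ≤ ((k i).natAbs : ℝ))]
      _ = d * (n:ℝ) ^ 2 := by rw [Finset.sum_const, Finset.card_univ, Fintype.card_fin,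
          nsmul_eq_mul]
  have hnR : (1:ℝ) ≤ (n:ℝ) := by exact_mod_cast hn1
  have hπ : (0:ℝ) < π := Real.pi_pos
  -- weight bound
  have hwb : (1 + 4 * π ^ 2 * Q) ^ (-(α / 2)) ≤ (2 * π) ^ (-α) * (n : ℝ) ^ (-α) := by
    have hbase : (0:ℝ) < 4 * π ^ 2 * (n:ℝ)^2 := by positivity
    have hle : 4 * π ^ 2 * (n:ℝ)^2 ≤ 1 + 4 * π ^ 2 * Q := by nlinarith
    have h1 : (1 + 4 * π ^ 2 * Q) ^ (-(α / 2)) ≤ (4 * π ^ 2 * (n:ℝ)^2) ^ (-(α / 2)) :=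
      Real.rpow_le_rpow_of_nonpos hbase hle (by linarith)
    have h2 : (4 * π ^ 2 * (n:ℝ)^2 : ℝ) = (2 * π * n) ^ (2:ℕ) := by ring
    have h3 : ((2 * π * (n:ℝ)) ^ (2:ℕ)) ^ (-(α / 2)) = (2 * π * (n:ℝ)) ^ (-α) := by
      rw [← Real.rpow_natCast (2 * π * (n:ℝ)) 2, ← Real.rpow_mul (by positivity)]
      congr 1
      push_cast
      ring
    have h4 : (2 * π * (n:ℝ)) ^ (-α) = (2 * π) ^ (-α) * (n:ℝ) ^ (-α) :=
      Real.mul_rpow (by positivity) (by positivity)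
    rw [h2, h3, h4] at h1
    exact h1
  -- sine bound
  have hsb : 2 * Real.sin (π * S) ^ 2 ≤ 2 * min 1 (π ^ 2 * d * (n:ℝ) ^ 2 * T) := by
    have hs1 : Real.sin (π * S) ^ 2 ≤ 1 := Real.sin_sq_le_one _
    have hs2 : Real.sin (π * S) ^ 2 ≤ π ^ 2 * d * (n:ℝ) ^ 2 * T := by
      have hcs : S ^ 2 ≤ Q * T := by
        rw [hS, hQ, hT]
        exact Finset.sum_mul_sq_le_sq_mul_sq _ _ _
      calc Real.sin (π * S) ^ 2 ≤ (π * S) ^ 2 := Real.sin_sq_le_sq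
        _ = π ^ 2 * S ^ 2 := by ring
        _ ≤ π ^ 2 * (Q * T) := by nlinarith [sq_nonneg π]
        _ ≤ π ^ 2 * ((d:ℝ) * (n:ℝ)^2 * T) := by
            have : Q * T ≤ (d:ℝ) * (n:ℝ)^2 * T := mul_le_mul_of_nonneg_right hQd hT0
            nlinarith [sq_nonneg π]
        _ = π ^ 2 * d * (n:ℝ) ^ 2 * T := by ring
    have := le_min hs1 hs2
    linarith
  have hw0 : 0 ≤ (1 + 4 * π ^ 2 * Q) ^ (-(α / 2)) := Real.rpow_nonneg (by nlinarith) _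
  have hb0 : 0 ≤ (2 * π) ^ (-α) * (n : ℝ) ^ (-α) :=
    mul_nonneg (Real.rpow_nonneg (by positivity) _) (Real.rpow_nonneg (by positivity) _)
  have hsin0 : 0 ≤ 2 * Real.sin (π * S) ^ 2 := by positivity
  calc (1 + 4 * π ^ 2 * Q) ^ (-(α / 2)) * (2 * Real.sin (π * S) ^ 2)
      ≤ ((2 * π) ^ (-α) * (n : ℝ) ^ (-α)) * (2 * min 1 (π ^ 2 * d * (n:ℝ) ^ 2 * T)) :=
        mul_le_mul hwb hsb hsin0 hb0
    _ = 2 * (2 * π) ^ (-α) * (n : ℝ) ^ (-α) * min 1 (π ^ 2 * d * (n:ℝ) ^ 2 * T) := by ring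

/-- Hölder estimate at the diagonal for the Bessel kernel on the torus:
`B^α(x,x) - B^α(x,y) = ∑_k (1+4π²|k|²)^(-α/2) · 2 sin²(π k·(x-y)) ≤ c |x-y|^(α-d)`. -/
theorem stmt1 (d : ℕ) (hd : 1 ≤ d) (α : ℝ) (h1 : (d : ℝ) < α) (h2 : α < d + 2) :
    ∃ c > 0, ∀ x y : EuclideanSpace ℝ (Fin d), dist x y ≤ 1 →
      (∑' k : Fin d → ℤ,
          (1 + 4 * π ^ 2 * ∑ i, (k i : ℝ) ^ 2) ^ (-(α / 2)) *
            (2 * Real.sin (π * ∑ i, (k i : ℝ) * (x i - y i)) ^ 2))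
        ≤ c * dist x y ^ (α - d) := by
  have hπ : (0:ℝ) < π := Real.pi_pos
  have hdR : (1:ℝ) ≤ (d:ℝ) := by exact_mod_cast hd
  have hα0 : (0:ℝ) < α := by linarith
  have hda : (0:ℝ) < α - d := by linarith
  have hd2 : (0:ℝ) < (d:ℝ) + 2 - α := by linarith
  set D : ℝ := 2 * d * 3 ^ (d - 1) with hD
  set K : ℝ := 2 * (2 * π) ^ (-α) with hK
  have hD0 : (0:ℝ) ≤ D := by positivity
  have hK0 : (0:ℝ) ≤ K := by positivity
  set C1 : ℝ := D * K * (π ^ 2 * d) * (1 + 1 / ((d:ℝ) + 2 - α)) * 2 ^ ((d:ℝ) + 2 - α)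
    with hC1
  set C2 : ℝ := D * K / (α - d) with hC2
  have hC10 : (0:ℝ) ≤ C1 := by
    apply mul_nonneg
    apply mul_nonneg
    apply mul_nonneg (mul_nonneg hD0 hK0) (by positivity)
    · have : (0:ℝ) ≤ 1 / ((d:ℝ) + 2 - α) := by positivity
      linarith
    · positivity
  have hC20 : (0:ℝ) ≤ C2 := div_nonneg (mul_nonneg hD0 hK0) hda.le
  refine ⟨C1 + C2 + 1, by linarith, ?_⟩
  intro x y hxy
  set t := dist x y with ht
  have ht0 : 0 ≤ t := dist_nonneg
  have hrhs0 : 0 ≤ (C1 + C2 + 1) * t ^ (α - d) := by positivity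
  have hTt : ∑ i, (x i - y i) ^ 2 = t ^ 2 := by
    rw [ht, EuclideanSpace.dist_eq]
    rw [Real.sq_sqrt (Finset.sum_nonneg fun i _ => sq_nonneg _)]
    refine Finset.sum_congr rfl fun i _ => ?_
    rw [Real.dist_eq, sq_abs]
  rcases eq_or_lt_of_le ht0 with ht0' | htpos
  · -- t = 0 : x = y, all terms vanish
    have hdxy : dist x y = 0 := by rw [← ht]; exact ht0'.symm
    have hxy0 : x = y := dist_eq_zero.mp hdxy
    have hzero : ∀ k : Fin d → ℤ,
        (1 + 4 * π ^ 2 * ∑ i, (k i : ℝ) ^ 2) ^ (-(α / 2)) *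
          (2 * Real.sin (π * ∑ i, (k i : ℝ) * (x i - y i)) ^ 2) = 0 := by
      intro k
      have : ∀ i, x i - y i = 0 := fun i => by rw [hxy0]; ring
      simp [this]
    calc (∑' k : Fin d → ℤ,
          (1 + 4 * π ^ 2 * ∑ i, (k i : ℝ) ^ 2) ^ (-(α / 2)) *
            (2 * Real.sin (π * ∑ i, (k i : ℝ) * (x i - y i)) ^ 2))
        = 0 := by rw [tsum_congr hzero]; exact tsum_zero
      _ ≤ (C1 + C2 + 1) * t ^ (α - d) := hrhs0
  · -- main case : t > 0
    classical
    set N := ⌈1/t⌉₊ with hNdef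
    have htinv : (1:ℝ) ≤ 1/t := by rw [le_div_iff₀ htpos]; linarith
    have hN1 : 1 ≤ N := by
      rw [hNdef]; exact Nat.one_le_ceil_iff.mpr (by positivity)
    have hNt : 1/t ≤ (N:ℝ) := Nat.le_ceil _
    have hN2 : (N:ℝ) ≤ 2/t := by
      have hc := Nat.ceil_lt_add_one (by positivity : (0:ℝ) ≤ 1/t)
      have h2t : 2/t = 1/t + 1/t := by ring
      rw [hNdef]; linarith
    -- main exponent facts
    have f1 : t^2 * (N:ℝ)^((d:ℝ)+2-α) ≤ 2^((d:ℝ)+2-α) * t^(α-(d:ℝ)) := by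
      have hN2' : (N:ℝ)^((d:ℝ)+2-α) ≤ (2/t)^((d:ℝ)+2-α) :=
        Real.rpow_le_rpow (Nat.cast_nonneg N) hN2 hd2.le
      have hdiv : (2/t)^((d:ℝ)+2-α) = 2^((d:ℝ)+2-α) / t^((d:ℝ)+2-α) :=
        Real.div_rpow (by norm_num : (0:ℝ) ≤ 2) ht0 _
      have hchain : t^2 * (2^((d:ℝ)+2-α) / t^((d:ℝ)+2-α)) = 2^((d:ℝ)+2-α) * t^(α-(d:ℝ)) := by
        have e2 : t^(α-(d:ℝ)) = t^((2:ℝ)) / t^((d:ℝ)+2-α) := by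
          rw [← Real.rpow_sub htpos]
          congr 1
          ring
        have e1 : t^(2:ℕ) = t^((2:ℝ)) := by
          rw [← Real.rpow_natCast t 2]
          norm_num
        rw [e2, e1]
        ring
      calc t^2 * (N:ℝ)^((d:ℝ)+2-α) ≤ t^2 * (2/t)^((d:ℝ)+2-α) := by
            apply mul_le_mul_of_nonneg_left hN2' (by positivity)
        _ = 2^((d:ℝ)+2-α) * t^(α-(d:ℝ)) := by rw [hdiv, hchain]
    have f2 : (N:ℝ)^((d:ℝ)-α) ≤ t^(α-(d:ℝ)) := by
      calc (N:ℝ)^((d:ℝ)-α) ≤ (1/t)^((d:ℝ)-α) :=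
            Real.rpow_le_rpow_of_nonpos (by positivity) hNt (by linarith)
        _ = t^(α-(d:ℝ)) := by
            rw [one_div, Real.inv_rpow ht0, ← Real.rpow_neg ht0]
            congr 1
            ring
    -- reduce to finite sums
    apply tsum_le_of_sum_le' hrhs0
    intro F
    set m : (Fin d → ℤ) → ℕ := fun k => Finset.univ.sup fun i => (k i).natAbs with hm
    set Box : ℕ → Finset (Fin d → ℤ) :=
      fun r => Fintype.piFinset fun _ => Finset.Icc (-(r:ℤ)) (r:ℤ) with hBox
    have memBox : ∀ (r : ℕ) (k : Fin d → ℤ), k ∈ Box r ↔ m k ≤ r := by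
      intro r k
      rw [hBox, Fintype.mem_piFinset, hm]
      simp only [Finset.mem_Icc]
      rw [Finset.sup_le_iff]
      constructor
      · intro h i _; have := h i; omega
      · intro h i; have := h i (Finset.mem_univ i); omega
    set M := max N (F.sup m) with hM
    have hNM : N ≤ M := le_max_left _ _
    have hFB : F ⊆ Box M := fun k hk =>
      (memBox _ _).2 (le_trans (Finset.le_sup hk) (le_max_right _ _))
    have hnn : ∀ k : Fin d → ℤ, 0 ≤ (1 + 4 * π ^ 2 * ∑ i, (k i : ℝ) ^ 2) ^ (-(α / 2)) *
        (2 * Real.sin (π * ∑ i, (k i : ℝ) * (x i - y i)) ^ 2) := by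
      intro k
      have hb : (0:ℝ) < 1 + 4 * π ^ 2 * ∑ i, (k i : ℝ) ^ 2 := by positivity
      have := Real.rpow_nonneg hb.le (-(α/2))
      positivity
    -- shell sums
    have hshell : ∀ n : ℕ, 1 ≤ n →
        ∑ k ∈ (Box M).filter (fun k => m k = n),
          ((1 + 4 * π ^ 2 * ∑ i, (k i : ℝ) ^ 2) ^ (-(α / 2)) *
            (2 * Real.sin (π * ∑ i, (k i : ℝ) * (x i - y i)) ^ 2))
        ≤ D * (n:ℝ)^(d-1) * (K * (n:ℝ)^(-α) * min 1 (π^2*(d:ℝ)*(n:ℝ)^2*t^2)) := by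
      intro n hn
      have hB0 : (0:ℝ) ≤ K * (n:ℝ)^(-α) * min 1 (π^2*(d:ℝ)*(n:ℝ)^2*t^2) := by
        apply mul_nonneg (mul_nonneg hK0 (Real.rpow_nonneg (Nat.cast_nonneg n) _))
        exact le_min zero_le_one (by positivity)
      have hsubBox : Box (n-1) ⊆ Box n := fun k hk =>
        (memBox _ _).2 (le_trans ((memBox _ _).1 hk) (by omega))
      have hsub : (Box M).filter (fun k => m k = n) ⊆ Box n \ Box (n-1) := by
        intro k hk
        rw [Finset.mem_sdiff]
        obtain ⟨-, hkn⟩ := Finset.mem_filter.mp hk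
        refine ⟨(memBox _ _).2 (le_of_eq hkn), fun hc => ?_⟩
        have := (memBox _ _).1 hc
        omega
      have hcardN : ((Box M).filter (fun k => m k = n)).card ≤
          (Box n).card - (Box (n-1)).card := by
        refine le_trans (Finset.card_le_card hsub) ?_
        rw [Finset.card_sdiff_of_subset hsubBox]
      have hcardR : (((Box M).filter (fun k => m k = n)).card : ℝ) ≤ D * (n:ℝ)^(d-1) := by
        calc (((Box M).filter (fun k => m k = n)).card : ℝ)
            ≤ (((Box n).card - (Box (n-1)).card : ℕ) : ℝ) := by exact_mod_cast hcardN
          _ ≤ D * (n:ℝ)^(d-1) := by rw [hD, hBox]; exact shell_card_le d hd n hn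
      calc ∑ k ∈ (Box M).filter (fun k => m k = n),
            ((1 + 4 * π ^ 2 * ∑ i, (k i : ℝ) ^ 2) ^ (-(α / 2)) *
              (2 * Real.sin (π * ∑ i, (k i : ℝ) * (x i - y i)) ^ 2))
          ≤ ((Box M).filter (fun k => m k = n)).card
              • (K * (n:ℝ)^(-α) * min 1 (π^2*(d:ℝ)*(n:ℝ)^2*t^2)) := by
            apply Finset.sum_le_card_nsmul
            intro k hk
            obtain ⟨-, hkn⟩ := Finset.mem_filter.mp hk
            have htb := term_bound d hd α hα0 k (fun i => x i - y i) n hkn hn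
            simp only at htb
            rw [hTt] at htb
            rw [hK]
            exact htb
        _ = (((Box M).filter (fun k => m k = n)).card : ℝ)
              * (K * (n:ℝ)^(-α) * min 1 (π^2*(d:ℝ)*(n:ℝ)^2*t^2)) := by
            rw [nsmul_eq_mul]
        _ ≤ D * (n:ℝ)^(d-1) * (K * (n:ℝ)^(-α) * min 1 (π^2*(d:ℝ)*(n:ℝ)^2*t^2)) :=
            mul_le_mul_of_nonneg_right hcardR hB0
    -- near / far per-shell bounds
    have hnear : ∀ n : ℕ, 1 ≤ n →
        D * (n:ℝ)^(d-1) * (K * (n:ℝ)^(-α) * min 1 (π^2*(d:ℝ)*(n:ℝ)^2*t^2))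
        ≤ (D*K*(π^2*(d:ℝ))*t^2) * (n:ℝ)^((d:ℝ)+1-α) := by
      intro n hn
      have hn0 : (0:ℝ) < (n:ℝ) := by exact_mod_cast hn
      have hmin : min 1 (π^2*(d:ℝ)*(n:ℝ)^2*t^2) ≤ π^2*(d:ℝ)*(n:ℝ)^2*t^2 := min_le_right _ _
      have hpow : (n:ℝ)^(d-1) * ((n:ℝ)^(-α) * (n:ℝ)^(2:ℕ)) = (n:ℝ)^((d:ℝ)+1-α) := by
        rw [← Real.rpow_natCast (n:ℝ) (d-1), ← Real.rpow_natCast (n:ℝ) 2,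
          ← Real.rpow_add hn0, ← Real.rpow_add hn0]
        congr 1
        push_cast [Nat.cast_sub hd]
        ring
      have hfac : (0:ℝ) ≤ D * (n:ℝ)^(d-1) * (K * (n:ℝ)^(-α)) := by
        apply mul_nonneg (mul_nonneg hD0 (by positivity))
        exact mul_nonneg hK0 (Real.rpow_nonneg hn0.le _)
      calc D * (n:ℝ)^(d-1) * (K * (n:ℝ)^(-α) * min 1 (π^2*(d:ℝ)*(n:ℝ)^2*t^2))
          = (D * (n:ℝ)^(d-1) * (K * (n:ℝ)^(-α))) * min 1 (π^2*(d:ℝ)*(n:ℝ)^2*t^2) := by ring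
        _ ≤ (D * (n:ℝ)^(d-1) * (K * (n:ℝ)^(-α))) * (π^2*(d:ℝ)*(n:ℝ)^2*t^2) :=
            mul_le_mul_of_nonneg_left hmin hfac
        _ = (D*K*(π^2*(d:ℝ))*t^2) * ((n:ℝ)^(d-1) * ((n:ℝ)^(-α) * (n:ℝ)^(2:ℕ))) := by ring
        _ = (D*K*(π^2*(d:ℝ))*t^2) * (n:ℝ)^((d:ℝ)+1-α) := by rw [hpow]
    have hfar : ∀ n : ℕ, 1 ≤ n →
        D * (n:ℝ)^(d-1) * (K * (n:ℝ)^(-α) * min 1 (π^2*(d:ℝ)*(n:ℝ)^2*t^2))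
        ≤ (D*K) * (n:ℝ)^((d:ℝ)-1-α) := by
      intro n hn
      have hn0 : (0:ℝ) < (n:ℝ) := by exact_mod_cast hn
      have hmin : min 1 (π^2*(d:ℝ)*(n:ℝ)^2*t^2) ≤ 1 := min_le_left _ _
      have hpow : (n:ℝ)^(d-1) * (n:ℝ)^(-α) = (n:ℝ)^((d:ℝ)-1-α) := by
        rw [← Real.rpow_natCast (n:ℝ) (d-1), ← Real.rpow_add hn0]
        congr 1
        push_cast [Nat.cast_sub hd]
        ring
      have hfac : (0:ℝ) ≤ D * (n:ℝ)^(d-1) * (K * (n:ℝ)^(-α)) := by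
        apply mul_nonneg (mul_nonneg hD0 (by positivity))
        exact mul_nonneg hK0 (Real.rpow_nonneg hn0.le _)
      calc D * (n:ℝ)^(d-1) * (K * (n:ℝ)^(-α) * min 1 (π^2*(d:ℝ)*(n:ℝ)^2*t^2))
          = (D * (n:ℝ)^(d-1) * (K * (n:ℝ)^(-α))) * min 1 (π^2*(d:ℝ)*(n:ℝ)^2*t^2) := by ring
        _ ≤ (D * (n:ℝ)^(d-1) * (K * (n:ℝ)^(-α))) * 1 := mul_le_mul_of_nonneg_left hmin hfac
        _ = (D*K) * ((n:ℝ)^(d-1) * (n:ℝ)^(-α)) := by ring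
        _ = (D*K) * (n:ℝ)^((d:ℝ)-1-α) := by rw [hpow]
    -- sum estimates
    have hhead' : ∑ n ∈ Finset.Icc 1 N, (n:ℝ)^((d:ℝ)+1-α)
        ≤ (1 + 1/((d:ℝ)+2-α)) * (N:ℝ)^((d:ℝ)+2-α) := by
      have e : (d:ℝ)+1-α+1 = (d:ℝ)+2-α := by ring
      rw [← e]
      exact head_sum_le (by linarith) (by linarith) hN1
    have htail' : ∑ n ∈ Finset.Icc (N+1) M, (n:ℝ)^((d:ℝ)-1-α)
        ≤ (N:ℝ)^((d:ℝ)-α) / (α-(d:ℝ)) := by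
      have e1 : (d:ℝ)-α = (d:ℝ)-1-α+1 := by ring
      have e2 : α-(d:ℝ) = -((d:ℝ)-1-α+1) := by ring
      rw [e1, e2]
      exact tail_sum_le (by linarith) hN1
    -- zero shell
    have h0 : ∑ k ∈ (Box M).filter (fun k => m k = 0),
        ((1 + 4 * π ^ 2 * ∑ i, (k i : ℝ) ^ 2) ^ (-(α / 2)) *
          (2 * Real.sin (π * ∑ i, (k i : ℝ) * (x i - y i)) ^ 2)) = 0 := by
      apply Finset.sum_eq_zero
      intro k hk
      obtain ⟨-, hk0⟩ := Finset.mem_filter.mp hk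
      have hki : ∀ i, k i = 0 := by
        intro i
        have : (k i).natAbs ≤ 0 := by
          rw [← hk0, hm]
          exact Finset.le_sup (f := fun i => (k i).natAbs) (Finset.mem_univ i)
        omega
      simp [hki]
    -- assemble
    calc ∑ k ∈ F, ((1 + 4 * π ^ 2 * ∑ i, (k i : ℝ) ^ 2) ^ (-(α / 2)) *
            (2 * Real.sin (π * ∑ i, (k i : ℝ) * (x i - y i)) ^ 2))
        ≤ ∑ k ∈ Box M, ((1 + 4 * π ^ 2 * ∑ i, (k i : ℝ) ^ 2) ^ (-(α / 2)) *
            (2 * Real.sin (π * ∑ i, (k i : ℝ) * (x i - y i)) ^ 2)) :=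
          Finset.sum_le_sum_of_subset_of_nonneg hFB fun k _ _ => hnn k
      _ = ∑ n ∈ Finset.range (M+1), ∑ k ∈ (Box M).filter (fun k => m k = n),
            ((1 + 4 * π ^ 2 * ∑ i, (k i : ℝ) ^ 2) ^ (-(α / 2)) *
              (2 * Real.sin (π * ∑ i, (k i : ℝ) * (x i - y i)) ^ 2)) :=
          (Finset.sum_fiberwise_of_maps_to
            (fun k hk => Finset.mem_range.2 (Nat.lt_succ_of_le ((memBox M k).1 hk))) _).symm
      _ = ∑ n ∈ Finset.Ico 1 (M+1), ∑ k ∈ (Box M).filter (fun k => m k = n),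
            ((1 + 4 * π ^ 2 * ∑ i, (k i : ℝ) ^ 2) ^ (-(α / 2)) *
              (2 * Real.sin (π * ∑ i, (k i : ℝ) * (x i - y i)) ^ 2)) := by
          have hins : Finset.range (M+1) = insert 0 (Finset.Ico 1 (M+1)) := by
            ext j
            simp only [Finset.mem_range, Finset.mem_insert, Finset.mem_Ico]
            omega
          rw [hins, Finset.sum_insert (by simp), h0, zero_add]
      _ ≤ ∑ n ∈ Finset.Ico 1 (M+1),
            D * (n:ℝ)^(d-1) * (K * (n:ℝ)^(-α) * min 1 (π^2*(d:ℝ)*(n:ℝ)^2*t^2)) :=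
          Finset.sum_le_sum fun n hn => hshell n (Finset.mem_Ico.mp hn).1
      _ = ∑ n ∈ Finset.Ico 1 (N+1),
            D * (n:ℝ)^(d-1) * (K * (n:ℝ)^(-α) * min 1 (π^2*(d:ℝ)*(n:ℝ)^2*t^2))
          + ∑ n ∈ Finset.Ico (N+1) (M+1),
            D * (n:ℝ)^(d-1) * (K * (n:ℝ)^(-α) * min 1 (π^2*(d:ℝ)*(n:ℝ)^2*t^2)) :=
          (Finset.sum_Ico_consecutive _ (by omega) (by omega)).symm
      _ ≤ (D*K*(π^2*(d:ℝ))*t^2) * ∑ n ∈ Finset.Icc 1 N, (n:ℝ)^((d:ℝ)+1-α)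
          + (D*K) * ∑ n ∈ Finset.Icc (N+1) M, (n:ℝ)^((d:ℝ)-1-α) := by
          apply add_le_add
          · rw [Finset.Ico_add_one_right_eq_Icc, Finset.mul_sum]
            exact Finset.sum_le_sum fun n hn => hnear n (Finset.mem_Icc.mp hn).1
          · rw [Finset.Ico_add_one_right_eq_Icc, Finset.mul_sum]
            exact Finset.sum_le_sum fun n hn => hfar n (by
              have := (Finset.mem_Icc.mp hn).1; omega)
      _ ≤ (D*K*(π^2*(d:ℝ))*t^2) * ((1 + 1/((d:ℝ)+2-α)) * (N:ℝ)^((d:ℝ)+2-α))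
          + (D*K) * ((N:ℝ)^((d:ℝ)-α) / (α-(d:ℝ))) := by
          apply add_le_add
          · apply mul_le_mul_of_nonneg_left hhead' (by positivity)
          · apply mul_le_mul_of_nonneg_left htail' (mul_nonneg hD0 hK0)
      _ ≤ C1 * t^(α-(d:ℝ)) + C2 * t^(α-(d:ℝ)) := by
          apply add_le_add
          · have h1p : (0:ℝ) ≤ 1 + 1/((d:ℝ)+2-α) := by positivity
            have hcoef : (0:ℝ) ≤ D*K*(π^2*(d:ℝ)) * (1 + 1/((d:ℝ)+2-α)) :=
              mul_nonneg (mul_nonneg (mul_nonneg hD0 hK0)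
                (mul_nonneg (sq_nonneg π) (Nat.cast_nonneg d))) h1p
            have := mul_le_mul_of_nonneg_left f1 hcoef
            calc (D*K*(π^2*(d:ℝ))*t^2) * ((1 + 1/((d:ℝ)+2-α)) * (N:ℝ)^((d:ℝ)+2-α))
                = (D*K*(π^2*(d:ℝ)) * (1 + 1/((d:ℝ)+2-α))) * (t^2 * (N:ℝ)^((d:ℝ)+2-α)) := by
                  ring
              _ ≤ (D*K*(π^2*(d:ℝ)) * (1 + 1/((d:ℝ)+2-α))) * (2^((d:ℝ)+2-α) * t^(α-(d:ℝ))) :=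
                  this
              _ = C1 * t^(α-(d:ℝ)) := by rw [hC1]; ring
          · calc (D*K) * ((N:ℝ)^((d:ℝ)-α) / (α-(d:ℝ)))
                = (D*K/(α-(d:ℝ))) * (N:ℝ)^((d:ℝ)-α) := by ring
              _ ≤ (D*K/(α-(d:ℝ))) * t^(α-(d:ℝ)) :=
                  mul_le_mul_of_nonneg_left f2 (div_nonneg (mul_nonneg hD0 hK0) hda.le)
              _ = C2 * t^(α-(d:ℝ)) := by rw [hC2]
      _ ≤ (C1 + C2 + 1) * t^(α-(d:ℝ)) := by
          nlinarith [Real.rpow_nonneg ht0 (α-(d:ℝ))]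
end

section
/- Let d ≥ 1 and d < α < d+1. Suppose K : (0,∞) → ℝ satisfies 0 ≤ K(t) ≤ c₀ t^{-d/2} for 0 < t ≤ s², K(t) ≤ c₀ t^{-(d+1)/2} s for s² ≤ t ≤ 1, and K(t) ≤ c₀ s for t ≥ 1, where 0 < s ≤ 1. Then ∫₀^∞ t^{α/2-1} e^{-t} K(t) dt ≤ c s^{α-d} for a constant c depending only on c₀, d, α. -/
open MeasureTheory Real

/-- Abstract Hölder continuity estimate for Bessel kernels: if `K(t)` models
`|W(t,x,y) - W(t,x,z)|` with `s = |y-z|`, then `∫₀^∞ t^(α/2-1) e^(-t) K(t) dt ≤ c s^(α-d)`. -/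
theorem stmt3 (d : ℕ) (hd : 1 ≤ d) (α : ℝ) (h1 : (d : ℝ) < α) (h2 : α < d + 1)
    (c₀ : ℝ) (hc₀ : 0 < c₀) :
    ∃ c > 0, ∀ (K : ℝ → ℝ) (s : ℝ), 0 < s → s ≤ 1 →
      (∀ t, 0 < t → 0 ≤ K t) →
      (∀ t, 0 < t → t ≤ s ^ 2 → K t ≤ c₀ * t ^ (-(d : ℝ) / 2)) →
      (∀ t, s ^ 2 ≤ t → t ≤ 1 → K t ≤ c₀ * t ^ (-((d : ℝ) + 1) / 2) * s) →
      (∀ t, 1 ≤ t → K t ≤ c₀ * s) →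
      (∫ t in Set.Ioi (0 : ℝ), t ^ (α / 2 - 1) * Real.exp (-t) * K t) ≤ c * s ^ (α - d) := by
  have hdr : (1:ℝ) ≤ (d:ℝ) := by exact_mod_cast hd
  have hαd : (0:ℝ) < α - d := sub_pos.mpr h1
  have hαd1 : (0:ℝ) < d + 1 - α := by linarith
  have hα : (0:ℝ) < α := by linarith
  have hG : 0 < Real.Gamma (α/2) := Real.Gamma_pos_of_pos (by linarith)
  refine ⟨2*c₀/(α-d) + 2*c₀/(d+1-α) + c₀ * Real.Gamma (α/2),
    by positivity, ?_⟩
  intro K s hs hs1 hK0 hKa hKb hKc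
  set c : ℝ := 2*c₀/(α-d) + 2*c₀/(d+1-α) + c₀ * Real.Gamma (α/2) with hc
  have hcpos : 0 < c := by positivity
  set f : ℝ → ℝ := fun t => t ^ (α / 2 - 1) * Real.exp (-t) * K t with hf
  have hspow : 0 < s ^ (α - (d:ℝ)) := Real.rpow_pos_of_pos hs _
  by_cases hint : IntegrableOn f (Set.Ioi (0:ℝ)) volume
  swap
  · rw [MeasureTheory.integral_undef hint]
    positivity
  have hs2 : (0:ℝ) < s^2 := by positivity
  have hs21 : s^2 ≤ 1 := by nlinarith
  have hsplit1 : Set.Ioc (0:ℝ) 1 ∪ Set.Ioi 1 = Set.Ioi 0 :=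
    Set.Ioc_union_Ioi_eq_Ioi zero_le_one
  have hsplit2 : Set.Ioc (0:ℝ) (s^2) ∪ Set.Ioc (s^2) 1 = Set.Ioc 0 1 :=
    Set.Ioc_union_Ioc_eq_Ioc hs2.le hs21
  have hsub1 : Set.Ioc (0:ℝ) (s^2) ⊆ Set.Ioi 0 := Set.Ioc_subset_Ioi_self
  have hsub2 : Set.Ioc (s^2) 1 ⊆ Set.Ioi (0:ℝ) := fun t ht => hs2.trans ht.1
  have hsub3 : Set.Ioi (1:ℝ) ⊆ Set.Ioi 0 := Set.Ioi_subset_Ioi zero_le_one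
  have hint1 : IntegrableOn f (Set.Ioc (0:ℝ) (s^2)) volume := hint.mono_set hsub1
  have hint2 : IntegrableOn f (Set.Ioc (s^2) 1) volume := hint.mono_set hsub2
  have hint3 : IntegrableOn f (Set.Ioi (1:ℝ)) volume := hint.mono_set hsub3
  have hsplit : (∫ t in Set.Ioi (0:ℝ), f t)
      = (∫ t in Set.Ioc (0:ℝ) (s^2), f t) + (∫ t in Set.Ioc (s^2) 1, f t)
        + (∫ t in Set.Ioi (1:ℝ), f t) := by
    rw [← hsplit1, MeasureTheory.setIntegral_union (Set.Ioc_disjoint_Ioi le_rfl)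
      measurableSet_Ioi (by rw [← hsplit2]; exact hint1.union hint2) hint3,
      ← hsplit2, MeasureTheory.setIntegral_union (Set.Ioc_disjoint_Ioc_of_le le_rfl)
      measurableSet_Ioc hint1 hint2]
  -- Piece 1
  have hb1 : (∫ t in Set.Ioc (0:ℝ) (s^2), f t)
      ≤ 2*c₀/(α-d) * s ^ (α - (d:ℝ)) := by
    have hib : IntegrableOn (fun t : ℝ => c₀ * t ^ ((α-d)/2 - 1)) (Set.Ioc (0:ℝ) (s^2)) volume :=
      ((intervalIntegral.intervalIntegrable_rpow' (by linarith)).1).const_mul c₀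
    have hmono : (∫ t in Set.Ioc (0:ℝ) (s^2), f t)
        ≤ ∫ t in Set.Ioc (0:ℝ) (s^2), c₀ * t ^ ((α-d)/2 - 1) := by
      refine MeasureTheory.setIntegral_mono_on hint1 hib measurableSet_Ioc ?_
      intro t ht
      have ht0 : 0 < t := ht.1
      calc t ^ (α / 2 - 1) * Real.exp (-t) * K t
          ≤ t ^ (α / 2 - 1) * 1 * (c₀ * t ^ (-(d:ℝ)/2)) := by
            have h1 : rexp (-t) ≤ 1 := Real.exp_le_one_iff.mpr (by linarith)
            have h2 : K t ≤ c₀ * t ^ (-(d:ℝ)/2) := hKa t ht0 ht.2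
            have h3 : 0 ≤ K t := hK0 t ht0
            gcongr
        _ = c₀ * t ^ ((α-d)/2 - 1) := by
            rw [mul_one, mul_left_comm, ← Real.rpow_add ht0,
              show α/2 - 1 + (-(d:ℝ)/2) = (α-d)/2 - 1 by ring]
    have hval : (∫ t in Set.Ioc (0:ℝ) (s^2), c₀ * t ^ ((α-d)/2 - 1))
        = 2*c₀/(α-d) * s ^ (α - (d:ℝ)) := by
      rw [integral_const_mul _ _, ← intervalIntegral.integral_of_le hs2.le,
        integral_rpow (Or.inl (by linarith)),
        show (α-d)/2 - 1 + 1 = (α-d)/2 by ring,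
        Real.zero_rpow (by positivity)]
      have hss : (s^2:ℝ) ^ ((α-(d:ℝ))/2) = s ^ (α - (d:ℝ)) := by
        rw [← Real.rpow_natCast s 2, ← Real.rpow_mul hs.le]
        norm_num
        ring_nf
      rw [hss]
      field_simp
      ring
    linarith
  -- Piece 2
  have hb2 : (∫ t in Set.Ioc (s^2) 1, f t)
      ≤ 2*c₀/(d+1-α) * s ^ (α - (d:ℝ)) := by
    set β : ℝ := (α - d - 1)/2 with hβ
    have hβneg : β < 0 := by rw [hβ]; linarith
    have h0nm : (0:ℝ) ∉ Set.uIcc (s^2) 1 := by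
      rw [Set.uIcc_of_le hs21]
      intro h
      exact absurd h.1 (not_le.mpr hs2)
    have hib : IntegrableOn (fun t : ℝ => (c₀*s) * t ^ (β - 1)) (Set.Ioc (s^2) 1) volume :=
      ((intervalIntegral.intervalIntegrable_rpow (Or.inr h0nm)).1).const_mul _
    have hmono : (∫ t in Set.Ioc (s^2) 1, f t)
        ≤ ∫ t in Set.Ioc (s^2) 1, (c₀*s) * t ^ (β - 1) := by
      refine MeasureTheory.setIntegral_mono_on hint2 hib measurableSet_Ioc ?_
      intro t ht
      have ht0 : 0 < t := hs2.trans ht.1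
      calc t ^ (α / 2 - 1) * Real.exp (-t) * K t
          ≤ t ^ (α / 2 - 1) * 1 * (c₀ * t ^ (-((d:ℝ)+1)/2) * s) := by
            have h1 : rexp (-t) ≤ 1 := Real.exp_le_one_iff.mpr (by linarith)
            have h2 : K t ≤ c₀ * t ^ (-((d:ℝ)+1)/2) * s := hKb t ht.1.le ht.2
            have h3 : 0 ≤ K t := hK0 t ht0
            gcongr
        _ = (c₀*s) * t ^ (β - 1) := by
            rw [mul_one, hβ]
            rw [show t ^ (α / 2 - 1) * (c₀ * t ^ (-((d:ℝ)+1)/2) * s)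
              = (c₀*s) * (t ^ (α / 2 - 1) * t ^ (-((d:ℝ)+1)/2)) by ring,
              ← Real.rpow_add ht0,
              show α/2 - 1 + (-((d:ℝ)+1)/2) = (α - d - 1)/2 - 1 by ring]
    have hval : (∫ t in Set.Ioc (s^2) 1, (c₀*s) * t ^ (β - 1))
        = (c₀*s) * ((1 - (s^2) ^ β) / β) := by
      rw [integral_const_mul _ _, ← intervalIntegral.integral_of_le hs21,
        integral_rpow (Or.inr ⟨by linarith, h0nm⟩),
        show β - 1 + 1 = β by ring, Real.one_rpow]
    have hss : (s^2:ℝ) ^ β = s ^ (α - (d:ℝ) - 1) := by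
      rw [← Real.rpow_natCast s 2, ← Real.rpow_mul hs.le, hβ]
      norm_num
      ring_nf
    have hsmul : s * s ^ (α - (d:ℝ) - 1) = s ^ (α - (d:ℝ)) := by
      nth_rewrite 1 [← Real.rpow_one s]
      rw [← Real.rpow_add hs]
      ring_nf
    have hfin : (c₀*s) * ((1 - (s^2) ^ β) / β) ≤ 2*c₀/(d+1-α) * s ^ (α - (d:ℝ)) := by
      rw [hss]
      have key : (c₀*s) * ((1 - s ^ (α - (d:ℝ) - 1)) / β)
          = (c₀ * (s * s ^ (α - (d:ℝ) - 1)) - c₀ * s) * (1/(-β)) := by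
        rw [div_neg]
        ring
      rw [key, hsmul]
      have hβ2 : 1/(-β) = 2/(d+1-α) := by
        rw [hβ]; rw [div_eq_div_iff (by linarith) (by linarith)]; ring
      rw [hβ2]
      calc (c₀ * s ^ (α - (d:ℝ)) - c₀ * s) * (2/(d+1-α))
          ≤ (c₀ * s ^ (α - (d:ℝ))) * (2/(d+1-α)) := by
            apply mul_le_mul_of_nonneg_right _ (by positivity)
            linarith [mul_pos hc₀ hs]
        _ = 2*c₀/(d+1-α) * s ^ (α - (d:ℝ)) := by ring
    linarith
  -- Piece 3
  have hb3 : (∫ t in Set.Ioi (1:ℝ), f t)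
      ≤ c₀ * Real.Gamma (α/2) * s ^ (α - (d:ℝ)) := by
    have hGi : IntegrableOn (fun x : ℝ => Real.exp (-x) * x ^ (α/2 - 1)) (Set.Ioi (0:ℝ)) volume :=
      Real.GammaIntegral_convergent (by linarith)
    have hib : IntegrableOn (fun t : ℝ => (c₀*s) * (Real.exp (-t) * t ^ (α/2 - 1)))
        (Set.Ioi (1:ℝ)) volume := (hGi.mono_set hsub3).const_mul _
    have hmono : (∫ t in Set.Ioi (1:ℝ), f t)
        ≤ ∫ t in Set.Ioi (1:ℝ), (c₀*s) * (Real.exp (-t) * t ^ (α/2 - 1)) := by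
      refine MeasureTheory.setIntegral_mono_on hint3 hib measurableSet_Ioi ?_
      intro t ht
      have ht1 : (1:ℝ) ≤ t := le_of_lt ht
      calc t ^ (α / 2 - 1) * Real.exp (-t) * K t
          ≤ t ^ (α / 2 - 1) * Real.exp (-t) * (c₀ * s) := by
            have h2 : K t ≤ c₀ * s := hKc t ht1
            gcongr
        _ = (c₀*s) * (Real.exp (-t) * t ^ (α/2 - 1)) := by ring
    have hval : (∫ t in Set.Ioi (1:ℝ), (c₀*s) * (Real.exp (-t) * t ^ (α/2 - 1)))
        ≤ (c₀*s) * Real.Gamma (α/2) := by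
      rw [integral_const_mul _ _]
      have hle : (∫ t in Set.Ioi (1:ℝ), Real.exp (-t) * t ^ (α/2 - 1))
          ≤ ∫ t in Set.Ioi (0:ℝ), Real.exp (-t) * t ^ (α/2 - 1) := by
        refine MeasureTheory.setIntegral_mono_set hGi ?_ (Filter.Eventually.of_forall hsub3)
        filter_upwards [MeasureTheory.ae_restrict_mem measurableSet_Ioi] with x hx
        exact mul_nonneg (Real.exp_pos _).le (Real.rpow_nonneg (le_of_lt hx) _)
      rw [← Real.Gamma_eq_integral (by linarith : (0:ℝ) < α/2)] at hle
      exact mul_le_mul_of_nonneg_left hle (by positivity)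
    have hss : s ≤ s ^ (α - (d:ℝ)) := by
      nth_rewrite 1 [← Real.rpow_one s]
      exact Real.rpow_le_rpow_of_exponent_ge hs hs1 (by linarith)
    calc (∫ t in Set.Ioi (1:ℝ), f t) ≤ (c₀*s) * Real.Gamma (α/2) := le_trans hmono hval
      _ ≤ c₀ * Real.Gamma (α/2) * s ^ (α - (d:ℝ)) := by
          rw [mul_assoc, mul_comm s, ← mul_assoc]
          exact mul_le_mul_of_nonneg_left hss (by positivity)
  calc (∫ t in Set.Ioi (0:ℝ), f t)
      = _ := hsplit
    _ ≤ 2*c₀/(α-d) * s ^ (α - (d:ℝ)) + 2*c₀/(d+1-α) * s ^ (α - (d:ℝ))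
        + c₀ * Real.Gamma (α/2) * s ^ (α - (d:ℝ)) := by linarith
    _ = c * s ^ (α - (d:ℝ)) := by rw [hc]; ring
end

section
/- Let M be a probability space decomposed into disjoint measurable sets U₁,…,U_N of measures ω₁,…,ω_N, and let K : M × M → ℝ be a bounded symmetric measurable kernel with ∫∫ K(x,y) dx dy = 1. Then the average over (z₁,…,z_N) ∈ U₁ × ⋯ × U_N (with respect to the normalized product measure ∏ ω_j⁻¹ dz_j) of ∑_{i,j} ω_i ω_j K(z_i, z_j) − 1 equals ∑_{j=1}^N ∫_{U_j} ∫_{U_j} (K(x,x) − K(x,y)) dx dy. -/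
open MeasureTheory

lemma aux_integrable {α : Type*} [MeasurableSpace α] {μ : Measure α} [IsFiniteMeasure μ]
    {f : α → ℝ} (hf : Measurable f) {C : ℝ} (h : ∀ x, |f x| ≤ C) : Integrable f μ :=
  ⟨hf.aestronglyMeasurable, HasFiniteIntegral.of_bounded (C := C)
    (Filter.Eventually.of_forall (fun x => by simpa [Real.norm_eq_abs] using h x))⟩
lemma aux_image {n : ℕ} (i : Fin (n + 1)) :
    Finset.image i.succAbove Finset.univ = Finset.univ.erase i := by
  ext x
  simp [Finset.mem_erase, Fin.exists_succAbove_eq_iff]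

lemma aux_eval {M : Type*} [MeasurableSpace M] {N : ℕ}
    (μ : Fin N → Measure M) [∀ k, IsFiniteMeasure (μ k)] (i : Fin N)
    (g : M → ℝ) (hg : Measurable g) (C : ℝ) (hb : ∀ x, |g x| ≤ C) :
    ∫ z, g (z i) ∂Measure.pi μ
      = (∏ k ∈ Finset.univ.erase i, (μ k Set.univ).toReal) * ∫ x, g x ∂μ i := by
  obtain ⟨n, rfl⟩ := Nat.exists_eq_succ_of_ne_zero (Nat.pos_iff_ne_zero.mp i.pos)
  have h1 := measurePreserving_piFinSuccAbove (α := fun _ : Fin (n + 1) => M) μ i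
  have h := h1.integral_comp' (f := MeasurableEquiv.piFinSuccAbove (fun _ => M) i)
    (fun w : M × (Fin n → M) => g w.1)
  have h0 : ∫ z, g (z i) ∂Measure.pi μ
      = ∫ z, g (((MeasurableEquiv.piFinSuccAbove (fun _ => M) i) z).1) ∂Measure.pi μ := rfl
  rw [h0, h, MeasureTheory.integral_prod]
  · simp only [integral_const, smul_eq_mul]
    rw [show (fun x : M => ((Measure.pi fun t => μ (i.succAbove t)).real Set.univ) * g x)
        = fun x : M => ((Measure.pi fun t => μ (i.succAbove t)).real Set.univ) * g x from rfl,
      integral_const_mul]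
    congr 1
    rw [measureReal_def, Measure.pi_univ, ENNReal.toReal_prod, ← aux_image i,
      Finset.prod_image (fun a _ b _ h => Fin.succAbove_right_injective h)]
  · exact aux_integrable (hg.comp measurable_fst) (fun w => hb _)

lemma aux_two {M : Type*} [MeasurableSpace M] {N : ℕ}
    (μ : Fin N → Measure M) [∀ k, IsFiniteMeasure (μ k)] {i j : Fin N} (hij : i ≠ j)
    (f : M → M → ℝ) (hf : Measurable (Function.uncurry f)) (C : ℝ) (hb : ∀ x y, |f x y| ≤ C) :
    ∫ z, f (z i) (z j) ∂Measure.pi μ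
      = (∏ k ∈ (Finset.univ.erase i).erase j, (μ k Set.univ).toReal)
          * ∫ x, (∫ y, f x y ∂μ j) ∂μ i := by
  obtain ⟨n, rfl⟩ := Nat.exists_eq_succ_of_ne_zero (Nat.pos_iff_ne_zero.mp i.pos)
  obtain ⟨j', rfl⟩ := Fin.exists_succAbove_eq hij.symm
  have h1 := measurePreserving_piFinSuccAbove (α := fun _ : Fin (n + 1) => M) μ i
  have h := h1.integral_comp' (f := MeasurableEquiv.piFinSuccAbove (fun _ => M) i)
    (fun w : M × (Fin n → M) => f w.1 (w.2 j'))
  have h0 : ∫ z, f (z i) (z (i.succAbove j')) ∂Measure.pi μ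
      = ∫ z, f (((MeasurableEquiv.piFinSuccAbove (fun _ => M) i) z).1)
          (((MeasurableEquiv.piFinSuccAbove (fun _ => M) i) z).2 j') ∂Measure.pi μ := rfl
  rw [h0, h, MeasureTheory.integral_prod]
  · have inner : ∀ x : M, (∫ b : Fin n → M, f x (b j') ∂Measure.pi (fun t => μ (i.succAbove t)))
        = (∏ k ∈ Finset.univ.erase j', (μ (i.succAbove k) Set.univ).toReal)
            * ∫ y, f x y ∂μ (i.succAbove j') := fun x =>
      aux_eval (fun t => μ (i.succAbove t)) j' (f x) (hf.comp measurable_prodMk_left) C (hb x)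
    simp only [inner]
    rw [integral_const_mul]
    congr 1
    have himg : Finset.image i.succAbove (Finset.univ.erase j')
        = (Finset.univ.erase i).erase (i.succAbove j') := by
      ext x
      simp only [Finset.mem_image, Finset.mem_erase, Finset.mem_univ, and_true]
      constructor
      · rintro ⟨t, ht, rfl⟩
        exact ⟨fun hc => ht (Fin.succAbove_right_injective hc), Fin.succAbove_ne i t⟩
      · rintro ⟨hx1, hx2⟩
        obtain ⟨t, rfl⟩ := Fin.exists_succAbove_eq hx2
        exact ⟨t, fun hc => hx1 (by rw [hc]), rfl⟩
    rw [← himg, Finset.prod_image (fun a _ b _ h => Fin.succAbove_right_injective h)]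
  · exact aux_integrable (hf.comp ((measurable_fst).prodMk
      ((measurable_pi_apply j').comp measurable_snd))) (fun w => hb _ _)

/-- The averaging identity in the proof of Theorem 5: the mean over stratified samples
`(z₁,…,z_N) ∈ U₁ × ⋯ × U_N` of the energy `∑_{i,j} ω_i ω_j K(z_i,z_j) − 1` equals
`∑_j ∫_{U_j} ∫_{U_j} (K(x,x) − K(x,y)) dx dy`. -/
theorem stmt6 {M : Type*} [MeasureSpace M] [IsProbabilityMeasure (volume : Measure M)]
    (N : ℕ) (U : Fin N → Set M) (hmeas : ∀ j, MeasurableSet (U j))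
    (hdisj : Pairwise (Function.onFun Disjoint U)) (hcover : (⋃ j, U j) = Set.univ)
    (ω : Fin N → ℝ) (hω : ∀ j, 0 < ω j)
    (hvol : ∀ j, volume (U j) = ENNReal.ofReal (ω j))
    (K : M → M → ℝ) (hKm : Measurable (Function.uncurry K))
    (C : ℝ) (hKb : ∀ x y, |K x y| ≤ C) (hKs : ∀ x y, K x y = K y x)
    (hK1 : (∫ x, ∫ y, K x y) = 1) :
    (∏ j, (ω j)⁻¹) *
        (∫ z : Fin N → M, ((∑ i, ∑ j, ω i * ω j * K (z i) (z j)) - 1)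
          ∂Measure.pi fun j => (volume : Measure M).restrict (U j))
      = ∑ j, ∫ x in U j, ∫ y in U j, (K x x - K x y) := by
  classical
  set μ : Fin N → Measure M := fun j => (volume : Measure M).restrict (U j) with hμdef
  haveI hfin : ∀ k, IsFiniteMeasure (μ k) := fun k =>
    inferInstanceAs (IsFiniteMeasure ((volume : Measure M).restrict (U k)))
  show (∏ j, (ω j)⁻¹) *
      (∫ z : Fin N → M, ((∑ i, ∑ j, ω i * ω j * K (z i) (z j)) - 1) ∂Measure.pi μ)
    = ∑ j, ∫ x, (∫ y, (K x x - K x y) ∂μ j) ∂μ j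
  have hμr : ∀ k, (μ k Set.univ).toReal = ω k := fun k => by
    rw [show μ k Set.univ = ENNReal.ofReal (ω k) by
      rw [hμdef]; simp only [Measure.restrict_apply_univ]; exact hvol k]
    exact ENNReal.toReal_ofReal (hω k).le
  -- measurability helpers
  have hKdiag : Measurable (fun x : M => K x x) :=
    hKm.comp (measurable_id.prodMk measurable_id)
  have hKleft : ∀ x : M, Measurable (fun y : M => K x y) := fun x =>
    hKm.comp measurable_prodMk_left
  -- integrability of partial integrals
  have hBint : ∀ i j : Fin N, Integrable (fun x => ∫ y, K x y ∂μ j) (μ i) := fun i j =>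
    (aux_integrable (μ := (μ i).prod (μ j)) hKm (fun p => hKb p.1 p.2)).integral_prod_left
  -- evaluation of the coordinate integrals
  have hdiagI : ∀ i : Fin N, ∫ z, K (z i) (z i) ∂Measure.pi μ
      = (∏ k ∈ Finset.univ.erase i, ω k) * ∫ x, K x x ∂μ i := fun i => by
    rw [aux_eval μ i (fun x => K x x) hKdiag C (fun x => hKb x x)]
    congr 1
    exact Finset.prod_congr rfl (fun k _ => hμr k)
  have hoffI : ∀ i j : Fin N, i ≠ j → ∫ z, K (z i) (z j) ∂Measure.pi μ
      = (∏ k ∈ (Finset.univ.erase i).erase j, ω k)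
          * ∫ x, (∫ y, K x y ∂μ j) ∂μ i := fun i j hij => by
    rw [aux_two μ hij K hKm C hKb]
    congr 1
    exact Finset.prod_congr rfl (fun k _ => hμr k)
  -- per-term identity
  have hterm : ∀ i j : Fin N,
      ω i * ω j * ∫ z, K (z i) (z j) ∂Measure.pi μ
        = (∏ k, ω k) * (if i = j then ω i * ∫ x, K x x ∂μ i
            else ∫ x, (∫ y, K x y ∂μ j) ∂μ i) := by
    intro i j
    have hP1 : (∏ k, ω k) = ω i * ∏ k ∈ Finset.univ.erase i, ω k :=
      (Finset.mul_prod_erase _ _ (Finset.mem_univ i)).symm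
    by_cases hij : i = j
    · subst hij
      rw [hdiagI i, if_pos rfl, hP1]; ring
    · have hP2 : (∏ k ∈ Finset.univ.erase i, ω k)
          = ω j * ∏ k ∈ (Finset.univ.erase i).erase j, ω k :=
        (Finset.mul_prod_erase _ _
          (Finset.mem_erase.mpr ⟨Ne.symm hij, Finset.mem_univ j⟩)).symm
      rw [hoffI i j hij, if_neg hij, hP1, hP2]; ring
  -- expansion of the big integral
  have hintT : ∀ i j : Fin N,
      Integrable (fun z : Fin N → M => ω i * ω j * K (z i) (z j)) (Measure.pi μ) := fun i j =>
    (aux_integrable (f := fun z : Fin N → M => K (z i) (z j))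
      (show Measurable fun z : Fin N → M => K (z i) (z j) from
        hKm.comp (((measurable_pi_apply i).prodMk (measurable_pi_apply j) :
          Measurable fun z : Fin N → M => (z i, z j))))
      (fun z => hKb _ _)).const_mul _
  have hmass : ((Measure.pi μ) Set.univ).toReal = ∏ k, ω k := by
    rw [Measure.pi_univ, ENNReal.toReal_prod]
    exact Finset.prod_congr rfl fun k _ => hμr k
  have hexp : ∫ z, ((∑ i, ∑ j, ω i * ω j * K (z i) (z j)) - 1) ∂Measure.pi μ
      = (∑ i, ∑ j, ω i * ω j * ∫ z, K (z i) (z j) ∂Measure.pi μ) - ∏ k, ω k := by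
    rw [integral_sub
        (integrable_finset_sum _ fun i _ => integrable_finset_sum _ fun j _ => hintT i j)
        (integrable_const 1)]
    congr 1
    · rw [integral_finset_sum _ fun i _ =>
        integrable_finset_sum _ fun j _ => hintT i j]
      refine Finset.sum_congr rfl fun i _ => ?_
      rw [integral_finset_sum _ fun j _ => hintT i j]
      exact Finset.sum_congr rfl fun j _ => integral_const_mul _ _
    · rw [MeasureTheory.integral_const, smul_eq_mul, mul_one, measureReal_def, hmass]
  -- decomposition of hK1 along the partition
  have hvolsum : (volume : Measure M) = Measure.sum μ := by
    conv_lhs => rw [← Measure.restrict_univ (μ := (volume : Measure M)), ← hcover]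
    rw [Measure.restrict_iUnion hdisj hmeas]
  have hsplit : ∀ (f : M → ℝ), Integrable f (volume : Measure M) →
      (∫ x, f x) = ∑ i, ∫ x, f x ∂μ i := by
    intro f hf
    rw [hvolsum] at hf ⊢
    rw [integral_sum_measure hf, tsum_fintype]
  have hinner : ∀ x : M, (∫ y, K x y) = ∑ j, ∫ y, K x y ∂μ j := fun x =>
    hsplit (fun y => K x y) (aux_integrable (hKleft x) (fun y => hKb x y))
  have houtF : Integrable (fun x => ∑ j, ∫ y, K x y ∂μ j) (volume : Measure M) :=
    integrable_finset_sum _ fun j _ =>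
      (aux_integrable (μ := (volume : Measure M).prod (μ j)) hKm
        (fun p => hKb p.1 p.2)).integral_prod_left
  have hone : (1 : ℝ) = ∑ i, ∑ j, ∫ x, (∫ y, K x y ∂μ j) ∂μ i := by
    conv_lhs => rw [← hK1]
    rw [show (fun x : M => ∫ y, K x y) = (fun x : M => ∑ j, ∫ y, K x y ∂μ j) from
      funext hinner]
    rw [hsplit _ houtF]
    exact Finset.sum_congr rfl fun i _ =>
      integral_finset_sum _ fun j _ => hBint i j
  -- the right-hand side
  have hRHS : ∀ j : Fin N, (∫ x, (∫ y, (K x x - K x y) ∂μ j) ∂μ j)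
      = ω j * (∫ x, K x x ∂μ j) - ∫ x, (∫ y, K x y ∂μ j) ∂μ j := by
    intro j
    have e1 : ∀ x : M, (∫ y, (K x x - K x y) ∂μ j) = ω j * K x x - ∫ y, K x y ∂μ j := by
      intro x
      rw [integral_sub (integrable_const _)
        (aux_integrable (hKleft x) (fun y => hKb x y)),
        MeasureTheory.integral_const, smul_eq_mul, measureReal_def, hμr j]
    rw [show (fun x : M => ∫ y, (K x x - K x y) ∂μ j)
        = fun x : M => ω j * K x x - ∫ y, K x y ∂μ j from funext e1]
    rw [integral_sub ((aux_integrable hKdiag (fun x => hKb x x)).const_mul _) (hBint j j),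
      integral_const_mul]
  -- put everything together
  have hne : (∏ k, ω k) ≠ 0 := ne_of_gt (Finset.prod_pos fun k _ => hω k)
  have hinv : (∏ j, (ω j)⁻¹) = (∏ k, ω k)⁻¹ := by
    rw [← Finset.prod_inv_distrib]
  rw [hexp]
  simp only [hterm]
  rw [show (∑ i, ∑ j, (∏ k, ω k) * (if i = j then ω i * ∫ x, K x x ∂μ i
        else ∫ x, (∫ y, K x y ∂μ j) ∂μ i))
      = (∏ k, ω k) * ∑ i, ∑ j, (if i = j then ω i * ∫ x, K x x ∂μ i
        else ∫ x, (∫ y, K x y ∂μ j) ∂μ i) by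
    rw [Finset.mul_sum]
    exact Finset.sum_congr rfl fun i _ => (Finset.mul_sum _ _ _).symm]
  rw [hinv, show ((∏ k, ω k) * (∑ i, ∑ j, (if i = j then ω i * ∫ x, K x x ∂μ i
      else ∫ x, (∫ y, K x y ∂μ j) ∂μ i)) - ∏ k, ω k)
    = (∏ k, ω k) * ((∑ i, ∑ j, (if i = j then ω i * ∫ x, K x x ∂μ i
      else ∫ x, (∫ y, K x y ∂μ j) ∂μ i)) - 1) by ring,
    ← mul_assoc, inv_mul_cancel₀ hne, one_mul]
  conv_lhs => rw [hone]
  rw [← Finset.sum_sub_distrib]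
  refine Finset.sum_congr rfl fun i _ => ?_
  rw [← Finset.sum_sub_distrib, hRHS i]
  rw [show (∑ j, ((if i = j then ω i * ∫ x, K x x ∂μ i
      else ∫ x, (∫ y, K x y ∂μ j) ∂μ i) - ∫ x, (∫ y, K x y ∂μ j) ∂μ i))
    = ∑ j, (if i = j then ω i * (∫ x, K x x ∂μ i) - ∫ x, (∫ y, K x y ∂μ i) ∂μ i else 0) by
    refine Finset.sum_congr rfl fun j _ => ?_
    by_cases hij : i = j
    · subst hij; simp
    · simp [hij]]
  rw [Finset.sum_ite_eq]
  simp
end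

section
/- Let T be a self-adjoint operator on L²(M) (M a probability space) with orthonormal eigenbasis (φ_λ), eigenvalues T(λ), such that T1 = 1 (constants are fixed) and the φ_λ also satisfy ∑_λ (1+λ²)^{−α} |φ_λ(x)|² ≤ C² for some α and all x. Then for every f ∈ L² with ∑_λ (1+λ²)^α |F f(λ)|² < ∞ and every x, |T f(x) − ∫_M f dx| ≤ C · sup_{λ ≠ 0} |T(λ)| · (∑_λ (1+λ²)^α |F f(λ)|²)^{1/2}. -/
open MeasureTheory Real

/-- Cauchy–Schwarz for tsums of nonnegative reals. -/
lemma tsum_mul_le_sqrt_mul_sqrt' {ι : Type*} {a b : ι → ℝ}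
    (ha : ∀ i, 0 ≤ a i) (hb : ∀ i, 0 ≤ b i)
    (ha2 : Summable fun i => a i ^ 2) (hb2 : Summable fun i => b i ^ 2) :
    ∑' i, a i * b i ≤ Real.sqrt (∑' i, a i ^ 2) * Real.sqrt (∑' i, b i ^ 2) := by
  have hab : Summable fun i => a i * b i := by
    apply Summable.of_nonneg_of_le (fun i => mul_nonneg (ha i) (hb i))
      (fun i => ?_) ((ha2.add hb2).div_const 2)
    have := mul_self_nonneg (a i - b i)
    nlinarith [ha i, hb i]
  refine hab.tsum_le_of_sum_le fun s => ?_
  calc ∑ i ∈ s, a i * b i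
      ≤ Real.sqrt (∑ i ∈ s, a i ^ 2) * Real.sqrt (∑ i ∈ s, b i ^ 2) :=
        Real.sum_mul_le_sqrt_mul_sqrt s a b
    _ ≤ Real.sqrt (∑' i, a i ^ 2) * Real.sqrt (∑' i, b i ^ 2) := by
        gcongr <;>
          exact Summable.sum_le_tsum s (fun i _ => sq_nonneg _) ‹_›

/-- Abstract spectral-gap quadrature bound from Remark 22: if `T f = ∑ T(λ) F f(λ) φ_λ`
with `T` fixing constants and the eigenfunctions satisfying a pointwise Weyl bound, then
the quadrature error is controlled by the spectral gap times the Sobolev norm. -/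
theorem stmt17 {M : Type*} [MeasureSpace M] [IsProbabilityMeasure (volume : Measure M)]
    {ι : Type*} (l : ι → ℝ) (hl : ∀ i, 0 ≤ l i) (i₀ : ι) (hl0 : l i₀ = 0)
    (φ : ι → M → ℂ) (hφ0 : ∀ x, φ i₀ x = 1)
    (τ : ι → ℂ) (hτ0 : τ i₀ = 1) (S : ℝ) (hS0 : 0 ≤ S) (hS : ∀ i, i ≠ i₀ → ‖τ i‖ ≤ S)
    (f : M → ℂ) (hf : Integrable f (volume : Measure M)) (Ff : ι → ℂ)
    (hFf0 : Ff i₀ = ∫ x, f x)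
    (α C : ℝ) (hC : 0 ≤ C)
    (hFsum : Summable fun i => (1 + l i ^ 2) ^ α * ‖Ff i‖ ^ 2)
    (x : M)
    (hφsum : Summable fun i => (1 + l i ^ 2) ^ (-α) * ‖φ i x‖ ^ 2)
    (hφbound : (∑' i, (1 + l i ^ 2) ^ (-α) * ‖φ i x‖ ^ 2) ≤ C ^ 2)
    (Tfx : ℂ) (hTsum : Summable fun i => τ i * Ff i * φ i x)
    (hTfx : Tfx = ∑' i, τ i * Ff i * φ i x) :
    ‖Tfx - ∫ x, f x‖ ≤
      C * S * Real.sqrt (∑' i, (1 + l i ^ 2) ^ α * ‖Ff i‖ ^ 2) := by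
  classical
  set g : ι → ℂ := fun i => τ i * Ff i * φ i x with hg
  set a : ι → ℝ := fun i => Real.sqrt ((1 + l i ^ 2) ^ α) * ‖Ff i‖ with hadef
  set b : ι → ℝ := fun i => Real.sqrt ((1 + l i ^ 2) ^ (-α)) * ‖φ i x‖ with hbdef
  have hpos : ∀ i, (0:ℝ) < 1 + l i ^ 2 := fun i => by positivity
  have ha2 : ∀ i, a i ^ 2 = (1 + l i ^ 2) ^ α * ‖Ff i‖ ^ 2 := by
    intro i
    rw [hadef, mul_pow, Real.sq_sqrt (Real.rpow_nonneg (hpos i).le _)]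
  have hb2 : ∀ i, b i ^ 2 = (1 + l i ^ 2) ^ (-α) * ‖φ i x‖ ^ 2 := by
    intro i
    rw [hbdef, mul_pow, Real.sq_sqrt (Real.rpow_nonneg (hpos i).le _)]
  have hab : ∀ i, a i * b i = ‖Ff i‖ * ‖φ i x‖ := by
    intro i
    have : Real.sqrt ((1 + l i ^ 2) ^ α) * Real.sqrt ((1 + l i ^ 2) ^ (-α)) = 1 := by
      rw [← Real.sqrt_mul (Real.rpow_nonneg (hpos i).le _),
        ← Real.rpow_add (hpos i)]
      simp
    rw [hadef, hbdef]
    calc (Real.sqrt ((1 + l i ^ 2) ^ α) * ‖Ff i‖) * (Real.sqrt ((1 + l i ^ 2) ^ (-α)) * ‖φ i x‖)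
        = (Real.sqrt ((1 + l i ^ 2) ^ α) * Real.sqrt ((1 + l i ^ 2) ^ (-α))) * (‖Ff i‖ * ‖φ i x‖) := by ring
      _ = ‖Ff i‖ * ‖φ i x‖ := by rw [this]; ring
  have ha0 : ∀ i, 0 ≤ a i := fun i => mul_nonneg (Real.sqrt_nonneg _) (norm_nonneg _)
  have hb0 : ∀ i, 0 ≤ b i := fun i => mul_nonneg (Real.sqrt_nonneg _) (norm_nonneg _)
  have hsa : Summable fun i => a i ^ 2 := by simpa only [ha2] using hFsum
  have hsb : Summable fun i => b i ^ 2 := by simpa only [hb2] using hφsum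
  -- split off i₀
  have hsplit : ∑' i, g i = g i₀ + ∑' i, if i = i₀ then 0 else g i :=
    hTsum.tsum_eq_add_tsum_ite i₀
  have hgi0 : g i₀ = ∫ x, f x := by
    simp [hg, hτ0, hFf0, hφ0]
  have hdiff : Tfx - ∫ x, f x = ∑' i, if i = i₀ then 0 else g i := by
    rw [hTfx, hsplit, hgi0]; ring
  set h : ι → ℂ := fun i => if i = i₀ then 0 else g i with hh
  have hnormh : ∀ i, ‖h i‖ ≤ S * (a i * b i) := by
    intro i
    by_cases hi : i = i₀
    · simp [hh, hi]; positivity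
    · show ‖if i = i₀ then 0 else g i‖ ≤ _
      rw [if_neg hi, hab i, hg]
      simp only [norm_mul]
      have := hS i hi
      have h1 : ‖τ i‖ * ‖Ff i‖ * ‖φ i x‖ ≤ S * (‖Ff i‖ * ‖φ i x‖) := by
        rw [mul_assoc]
        exact mul_le_mul_of_nonneg_right this (by positivity)
      exact h1
  have hsab : Summable fun i => a i * b i := by
    apply Summable.of_nonneg_of_le (fun i => mul_nonneg (ha0 i) (hb0 i))
      (fun i => ?_) ((hsa.add hsb).div_const 2)
    have := mul_self_nonneg (a i - b i)
    nlinarith [ha0 i, hb0 i]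
  have hsh : Summable fun i => ‖h i‖ :=
    Summable.of_nonneg_of_le (fun i => norm_nonneg _) hnormh (hsab.mul_left S)
  calc ‖Tfx - ∫ x, f x‖ = ‖∑' i, h i‖ := by rw [hdiff]
    _ ≤ ∑' i, ‖h i‖ := norm_tsum_le_tsum_norm hsh
    _ ≤ ∑' i, S * (a i * b i) := Summable.tsum_le_tsum hnormh hsh (hsab.mul_left S)
    _ = S * ∑' i, a i * b i := tsum_mul_left
    _ ≤ S * (Real.sqrt (∑' i, a i ^ 2) * Real.sqrt (∑' i, b i ^ 2)) := by
        gcongr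
        exact tsum_mul_le_sqrt_mul_sqrt' ha0 hb0 hsa hsb
    _ ≤ C * S * Real.sqrt (∑' i, (1 + l i ^ 2) ^ α * ‖Ff i‖ ^ 2) := by
        have h1 : (∑' i, a i ^ 2) = ∑' i, (1 + l i ^ 2) ^ α * ‖Ff i‖ ^ 2 := by
          simp only [ha2]
        have h2 : Real.sqrt (∑' i, b i ^ 2) ≤ C := by
          rw [show (fun i => b i ^ 2) = fun i => (1 + l i ^ 2) ^ (-α) * ‖φ i x‖ ^ 2
            from funext hb2]
          calc Real.sqrt (∑' i, (1 + l i ^ 2) ^ (-α) * ‖φ i x‖ ^ 2)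
              ≤ Real.sqrt (C ^ 2) := Real.sqrt_le_sqrt hφbound
            _ = C := Real.sqrt_sq hC
        rw [h1]
        calc S * (Real.sqrt (∑' i, (1 + l i ^ 2) ^ α * ‖Ff i‖ ^ 2) * Real.sqrt (∑' i, b i ^ 2))
            ≤ S * (Real.sqrt (∑' i, (1 + l i ^ 2) ^ α * ‖Ff i‖ ^ 2) * C) := by
              gcongr
          _ = C * S * Real.sqrt (∑' i, (1 + l i ^ 2) ^ α * ‖Ff i‖ ^ 2) := by ring
end
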